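/- Let Ω and D be as above, M = (f₁,f₂)(-f₁,-f₂) of type (M7) with (f₁,f₂,f₃) a 3-cycle of D, and let Ω', D' with M' = (-f'₁,f'₂,f'₃)(-f'₃,-f'₂,f'₁) of type (M3) for a 3-cycle (f'₁,f'₂,f'₃) of D'. Then for the bijection g : Ω → Ω' with g(fᵢ) = f'ᵢ (commuting with negation), g∘M∘g⁻¹∘M' is a product of two distinct commuting 3-cycles. -/

import Mathlib

/-- The set of oriented edges of a triangle: `(i, true)` is `eᵢ`, `(i, false)` is `-eᵢ`. -/
abbrev Ω : Type := ZMod 3 × Bool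

/-- The orientation-reversing involution `e ↦ -e`. -/
def neg (x : Ω) : Ω := (x.1, !x.2)

/-- The rotation `D = (e₁,e₂,e₃)(-e₃,-e₂,-e₁)`. -/
def D : Equiv.Perm Ω where
  toFun x := if x.2 then (x.1 + 1, true) else (x.1 - 1, false)
  invFun x := if x.2 then (x.1 - 1, true) else (x.1 + 1, false)
  left_inv := by decide
  right_inv := by decide

/-- `eᵢ` for `i = 1, 2, 3` (indices taken mod 3, so `e₃ = ed 0`). -/
def ed (i : ZMod 3) : Ω := (i, true)

/-- `(f₁,f₂,f₃)` is a 3-cycle of the permutation `σ`. -/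
def IsCycleOf (σ : Equiv.Perm Ω) (f₁ f₂ f₃ : Ω) : Prop :=
  σ f₁ = f₂ ∧ σ f₂ = f₃ ∧ σ f₃ = f₁ ∧ f₁ ≠ f₂ ∧ f₂ ≠ f₃ ∧ f₁ ≠ f₃

/-- `M = (-f₁,f₂,f₃)(-f₃,-f₂,f₁)`. -/
def M3form (M : Equiv.Perm Ω) (f₁ f₂ f₃ : Ω) : Prop :=
  M (neg f₁) = f₂ ∧ M f₂ = f₃ ∧ M f₃ = neg f₁ ∧
  M (neg f₃) = neg f₂ ∧ M (neg f₂) = f₁ ∧ M f₁ = neg f₃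

/-- `M = (f₁,-f₂)(f₂,-f₁)` with `f₃, -f₃` fixed. -/
def M4form (M : Equiv.Perm Ω) (f₁ f₂ f₃ : Ω) : Prop :=
  M f₁ = neg f₂ ∧ M (neg f₂) = f₁ ∧ M f₂ = neg f₁ ∧ M (neg f₁) = f₂ ∧
  M f₃ = f₃ ∧ M (neg f₃) = neg f₃

/-- `M = (f₁,f₂)(-f₁,-f₂)` with `f₃, -f₃` fixed. -/
def M7form (M : Equiv.Perm Ω) (f₁ f₂ f₃ : Ω) : Prop :=
  M f₁ = f₂ ∧ M f₂ = f₁ ∧ M (neg f₁) = neg f₂ ∧ M (neg f₂) = neg f₁ ∧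
  M f₃ = f₃ ∧ M (neg f₃) = neg f₃

def M3type (M : Equiv.Perm Ω) : Prop := ∃ f₁ f₂ f₃, IsCycleOf D f₁ f₂ f₃ ∧ M3form M f₁ f₂ f₃
def M6type (M : Equiv.Perm Ω) : Prop := ∃ f₁ f₂ f₃, IsCycleOf D⁻¹ f₁ f₂ f₃ ∧ M3form M f₁ f₂ f₃
def M4type (M : Equiv.Perm Ω) : Prop := ∃ f₁ f₂ f₃, IsCycleOf D f₁ f₂ f₃ ∧ M4form M f₁ f₂ f₃
def M7type (M : Equiv.Perm Ω) : Prop := ∃ f₁ f₂ f₃, IsCycleOf D f₁ f₂ f₃ ∧ M7form M f₁ f₂ f₃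

/-- The two conditions satisfied by every z-monodromy:
`M(e) = e' → M(-e') = -e`, and `M(e) ≠ -e`. -/
def Cond (M : Equiv.Perm Ω) : Prop :=
  (∀ e, M (neg (M e)) = neg e) ∧ (∀ e, M e ≠ neg e)

/-- `σ` is a product of two distinct commuting 3-cycles, i.e. has cycle type (3,3). -/
def Two3 (σ : Equiv.Perm Ω) : Prop := σ.cycleType = {3, 3}

/-- The 3-cycle `(a,b,c)` as a permutation. -/
def cyc (a b c : Ω) : Equiv.Perm Ω := Equiv.swap a b * Equiv.swap b c


/-- Auxiliary: a permutation acting as two disjoint 3-cycles on six distinct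
elements of the 6-element type `Ω` has cycle type `{3, 3}`. -/
lemma cyc_cycleType_aux (a b c : Ω) (hab : a ≠ b) (hac : a ≠ c) (hbc : b ≠ c) :
    (cyc a b c).cycleType = {3} := by
  rw [show cyc a b c = Equiv.swap b a * Equiv.swap b c by rw [cyc, Equiv.swap_comm]]
  exact (Equiv.Perm.isThreeCycle_swap_mul_swap_same hab.symm hbc hac).cycleType

lemma key_aux (σ : Equiv.Perm Ω) (a b c d e f : Ω)
    (hab : a ≠ b) (hac : a ≠ c) (had : a ≠ d) (hae : a ≠ e) (haf : a ≠ f)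
    (hbc : b ≠ c) (hbd : b ≠ d) (hbe : b ≠ e) (hbf : b ≠ f)
    (hcd : c ≠ d) (hce : c ≠ e) (hcf : c ≠ f)
    (hde : d ≠ e) (hdf : d ≠ f) (hef : e ≠ f)
    (h1 : σ a = b) (h2 : σ b = c) (h3 : σ c = a)
    (h4 : σ d = e) (h5 : σ e = f) (h6 : σ f = d) :
    σ.cycleType = {3, 3} := by
  have hnd : ([a,b,c,d,e,f] : List Ω).Nodup := by
    simp [hab,hac,had,hae,haf,hbc,hbd,hbe,hbf,hcd,hce,hcf,hde,hdf,hef]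
  have hfs : ({a,b,c,d,e,f} : Finset Ω) = ([a,b,c,d,e,f] : List Ω).toFinset := by simp
  have hcard : ({a,b,c,d,e,f} : Finset Ω).card = 6 := by
    rw [hfs, List.toFinset_card_of_nodup hnd]; rfl
  have huniv : ({a,b,c,d,e,f} : Finset Ω) = Finset.univ :=
    Finset.eq_univ_of_card _ (by rw [hcard]; decide)
  have hcov : ∀ x : Ω, x = a ∨ x = b ∨ x = c ∨ x = d ∨ x = e ∨ x = f := by
    intro x
    have hx : x ∈ ({a,b,c,d,e,f} : Finset Ω) := huniv ▸ Finset.mem_univ x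
    simpa using hx
  have hσ : σ = cyc a b c * cyc d e f := by
    apply Equiv.ext; intro x
    rcases hcov x with rfl|rfl|rfl|rfl|rfl|rfl <;>
      simp [cyc, Equiv.swap_apply_def, h1,h2,h3,h4,h5,h6,
        hab,hac,had,hae,haf,hbc,hbd,hbe,hbf,hcd,hce,hcf,hde,hdf,hef,
        Ne.symm hab, Ne.symm hac, Ne.symm had, Ne.symm hae, Ne.symm haf,
        Ne.symm hbc, Ne.symm hbd, Ne.symm hbe, Ne.symm hbf,
        Ne.symm hcd, Ne.symm hce, Ne.symm hcf,
        Ne.symm hde, Ne.symm hdf, Ne.symm hef]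
  have hdisj : Equiv.Perm.Disjoint (cyc a b c) (cyc d e f) := by
    intro x
    rcases hcov x with rfl|rfl|rfl|rfl|rfl|rfl <;>
      simp [cyc, Equiv.swap_apply_def,
        hab,hac,had,hae,haf,hbc,hbd,hbe,hbf,hcd,hce,hcf,hde,hdf,hef,
        Ne.symm hab, Ne.symm hac, Ne.symm had, Ne.symm hae, Ne.symm haf,
        Ne.symm hbc, Ne.symm hbd, Ne.symm hbe, Ne.symm hbf,
        Ne.symm hcd, Ne.symm hce, Ne.symm hcf,
        Ne.symm hde, Ne.symm hdf, Ne.symm hef]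
  rw [hσ, hdisj.cycleType_mul, cyc_cycleType_aux a b c hab hac hbc,
    cyc_cycleType_aux d e f hde hdf hef]
  decide

/-- For a 3-cycle of the concrete rotation `D`, no `fᵢ` equals any `-fⱼ`. -/
lemma negfacts_aux (f₁ f₂ f₃ : Ω) (h12 : D f₁ = f₂) (h23 : D f₂ = f₃) :
    f₁ ≠ neg f₁ ∧ f₁ ≠ neg f₂ ∧ f₁ ≠ neg f₃ ∧ f₂ ≠ neg f₁ ∧ f₂ ≠ neg f₂ ∧
    f₂ ≠ neg f₃ ∧ f₃ ≠ neg f₁ ∧ f₃ ≠ neg f₂ ∧ f₃ ≠ neg f₃ := by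
  subst h12; subst h23; revert f₁; decide

/-- If `M = (f₁,f₂)(-f₁,-f₂)` is of type (M7) for a 3-cycle `(f₁,f₂,f₃)` of
`D`, `M′` is of type (M3) for a 3-cycle `(f′₁,f′₂,f′₃)` of the rotation `D′` of
the second triangle, and `g` commutes with negation and satisfies `g(fᵢ) = f′ᵢ`,
then `g ∘ M ∘ g⁻¹ ∘ M′` is a product of two distinct commuting 3-cycles. -/
theorem stmt_18 (D' : Equiv.Perm Ω) (f₁ f₂ f₃ f₁' f₂' f₃' : Ω)
    (M M' g : Equiv.Perm Ω)
    (hc : IsCycleOf D f₁ f₂ f₃) (hc' : IsCycleOf D' f₁' f₂' f₃')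
    (hM : M7form M f₁ f₂ f₃) (hM' : M3form M' f₁' f₂' f₃')
    (hg : ∀ x, g (neg x) = neg (g x))
    (h1 : g f₁ = f₁') (h2 : g f₂ = f₂') (h3 : g f₃ = f₃') :
    Two3 (g * M * g⁻¹ * M') := by
  obtain ⟨hd1, hd2, hd3, hne12, hne23, hne13⟩ := hc
  obtain ⟨_, _, _, hne12', hne23', hne13'⟩ := hc'
  obtain ⟨n11, n12, n13, n21, n22, n23, n31, n32, n33⟩ := negfacts_aux f₁ f₂ f₃ hd1 hd2
  -- transfer the negation facts through the injective `g`
  have gne : ∀ i j : Ω, i ≠ neg j → g i ≠ neg (g j) := by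
    intro i j h hh
    exact h (g.injective (by rw [hg, hh]))
  have n11' : f₁' ≠ neg f₁' := h1 ▸ gne f₁ f₁ n11
  have n12' : f₁' ≠ neg f₂' := h1 ▸ h2 ▸ gne f₁ f₂ n12
  have n13' : f₁' ≠ neg f₃' := h1 ▸ h3 ▸ gne f₁ f₃ n13
  have n21' : f₂' ≠ neg f₁' := h2 ▸ h1 ▸ gne f₂ f₁ n21
  have n22' : f₂' ≠ neg f₂' := h2 ▸ gne f₂ f₂ n22
  have n23' : f₂' ≠ neg f₃' := h2 ▸ h3 ▸ gne f₂ f₃ n23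
  have n31' : f₃' ≠ neg f₁' := h3 ▸ h1 ▸ gne f₃ f₁ n31
  have n32' : f₃' ≠ neg f₂' := h3 ▸ h2 ▸ gne f₃ f₂ n32
  have n33' : f₃' ≠ neg f₃' := h3 ▸ gne f₃ f₃ n33
  have negneg : ∀ z : Ω, neg (neg z) = z := fun z => by cases z; simp [neg]
  have neginj : Function.Injective neg := fun x y h => by
    rw [← negneg x, ← negneg y, h]
  -- inverse values of g
  have gi1 : g⁻¹ f₁' = f₁ := by rw [← h1]; simp
  have gi2 : g⁻¹ f₂' = f₂ := by rw [← h2]; simp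
  have gi3 : g⁻¹ f₃' = f₃ := by rw [← h3]; simp
  have gin1 : g⁻¹ (neg f₁') = neg f₁ := by rw [← h1, ← hg]; simp
  have gin2 : g⁻¹ (neg f₂') = neg f₂ := by rw [← h2, ← hg]; simp
  have gin3 : g⁻¹ (neg f₃') = neg f₃ := by rw [← h3, ← hg]; simp
  obtain ⟨m1, m2, m3, m4, m5, m6⟩ := hM
  obtain ⟨m1', m2', m3', m4', m5', m6'⟩ := hM'
  apply key_aux _ (neg f₁') f₁' (neg f₃') f₂' f₃' (neg f₂')
  · exact fun h => n11' h.symm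
  · exact fun h => hne13' (neginj h)
  · exact fun h => n21' h.symm
  · exact fun h => n31' h.symm
  · exact fun h => hne12' (neginj h)
  · exact n13'
  · exact hne12'
  · exact hne13'
  · exact n12'
  · exact fun h => n23' h.symm
  · exact fun h => n33' h.symm
  · exact fun h => hne23' (neginj h).symm
  · exact hne23'
  · exact n22'
  · exact fun h => n32' h
  · simp only [Equiv.Perm.mul_apply]; rw [m1', gi2, m2, h1]
  · simp only [Equiv.Perm.mul_apply]; rw [m6', gin3, m6, hg, h3]
  · simp only [Equiv.Perm.mul_apply]; rw [m4', gin2, m4, hg, h1]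
  · simp only [Equiv.Perm.mul_apply]; rw [m2', gi3, m5, h3]
  · simp only [Equiv.Perm.mul_apply]; rw [m3', gin1, m3, hg, h2]
  · simp only [Equiv.Perm.mul_apply]; rw [m5', gi1, m1, h2]
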